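/- If p and i are relatively prime integers with p even and i odd, then there exist odd integers c_p and c_i such that c_p·p + c_i·i = 1. -/
import Mathlib

/-- If p and i are coprime integers with p even and i odd, then there are Bezout
coefficients that are both odd: odd c_p, c_i with c_p·p + c_i·i = 1. -/
theorem stmt5 (p i : ℤ) (h : IsCoprime p i) (hp : Even p) (hi : Odd i) :
    ∃ cp ci : ℤ, Odd cp ∧ Odd ci ∧ cp * p + ci * i = 1 := by
  obtain ⟨a, b, hab⟩ := h
  have hb : Odd b := by
    rcases Int.even_or_odd b with hbe | hbo
    · exfalso
      have : Even (a * p + b * i) := (hp.mul_left a).add (hbe.mul_right i)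
      rw [hab] at this
      exact (Int.not_odd_iff_even.mpr this) odd_one
    · exact hbo
  rcases Int.even_or_odd a with hae | hao
  · refine ⟨a + i, b - p, hae.add_odd hi, hb.sub_even hp, ?_⟩
    ring_nf
    linarith [hab]
  · exact ⟨a, b, hao, hb, hab⟩
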